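/- Fiber-wise Calderón–Zygmund vanishing: let G be a nonnegative dyadic step function on R^2 with ‖G‖_{L^1} = 1; for each x let J_x be the collection of maximal dyadic intervals J with (1/|J|) ∫_J G(x,y) dy > 1, set E := ∪_x ∪_{J ∈ J_x} ({x} × J), and define the good part G̃(x,y) := (1/|J|)∫_J G(x,v) dv for y ∈ J ∈ J_x and G̃(x,y) := G(x,y) for (x,y) ∉ E. Then for every dyadic interval J′ and every (x,y) ∉ E one has (∫_R (G(x,v) − G̃(x,v)) ψ_{J′}(v) dv) ψ_{J′}(y) = 0. Consequently T_d(F, G − G̃)(x,y) = 0 for all (x,y) ∉ E. -/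

import Mathlib

open MeasureTheory Set
open scoped Classical

noncomputable section

/-- The dyadic interval `[2^k l, 2^k (l+1))`. -/
def dIco (k l : ℤ) : Set ℝ := Set.Ico ((2:ℝ)^k * l) ((2:ℝ)^k * (l+1))

/-- The Haar scaling function `φ_I = |I|^{-1/2} 1_I` of the dyadic interval `I = [2^k l, 2^k(l+1))`. -/
def haarPhi (k l : ℤ) (x : ℝ) : ℝ :=
  if x ∈ dIco k l then (Real.sqrt ((2:ℝ)^k))⁻¹ else 0

/-- The Haar wavelet `ψ_I = |I|^{-1/2} (1_{I_left} - 1_{I_right})`. -/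
def haarPsi (k l : ℤ) (x : ℝ) : ℝ :=
  if x ∈ dIco (k-1) (2*l) then (Real.sqrt ((2:ℝ)^k))⁻¹
  else if x ∈ dIco (k-1) (2*l+1) then -(Real.sqrt ((2:ℝ)^k))⁻¹ else 0

/-- The dyadic martingale average `E_k f` at scale `2^{-k}`:
`(E_k f)(x) = (1/|I|) ∫_I f` where `I ∋ x` is the dyadic interval of length `2^{-k}`. -/
def Ek (k : ℤ) (f : ℝ → ℝ) (x : ℝ) : ℝ :=
  (2:ℝ)^k * ∫ t in dIco (-k) ⌊(2:ℝ)^k * x⌋, f t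

/-- `E_k` acting in the first variable of a function on `ℝ²`. -/
def Ek1 (k : ℤ) (F : ℝ × ℝ → ℝ) (p : ℝ × ℝ) : ℝ := Ek k (fun u => F (u, p.2)) p.1

/-- `E_k` acting in the second variable of a function on `ℝ²`. -/
def Ek2 (k : ℤ) (F : ℝ × ℝ → ℝ) (p : ℝ × ℝ) : ℝ := Ek k (fun v => F (p.1, v)) p.2

/-- The martingale difference `Δ_k = E_{k+1} − E_k` in the first variable. -/
def Dk1 (k : ℤ) (F : ℝ × ℝ → ℝ) (p : ℝ × ℝ) : ℝ := Ek1 (k+1) F p - Ek1 k F p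

/-- The martingale difference `Δ_k = E_{k+1} − E_k` in the second variable. -/
def Dk2 (k : ℤ) (F : ℝ × ℝ → ℝ) (p : ℝ × ℝ) : ℝ := Ek2 (k+1) F p - Ek2 k F p

/-- The dyadic twisted paraproduct `T_d(F,G) = Σ_k (E_k^{(1)}F)(Δ_k^{(2)}G)`. -/
def Td (F G : ℝ × ℝ → ℝ) (p : ℝ × ℝ) : ℝ := ∑' k : ℤ, Ek1 k F p * Dk2 k G p

/-- A dyadic step function: a finite linear combination of indicator functions of
dyadic rectangles. -/
def IsDyadicStep (F : ℝ × ℝ → ℝ) : Prop :=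
  ∃ (s : Finset ((ℤ × ℤ) × (ℤ × ℤ))) (c : ((ℤ × ℤ) × (ℤ × ℤ)) → ℝ),
    ∀ p, F p = ∑ r ∈ s, c r * Set.indicator (dIco r.1.1 r.1.2 ×ˢ dIco r.2.1 r.2.2)
      (fun _ => (1:ℝ)) p

/-- The fiberwise average of `G(x, ·)` over the dyadic interval `[2^k l, 2^k(l+1))`
exceeds `1`. -/
def avgGt (G : ℝ × ℝ → ℝ) (x : ℝ) (k l : ℤ) : Prop :=
  1 < ((2:ℝ)^k)⁻¹ * ∫ y in dIco k l, G (x, y)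

/-- `dIco k l` is a *maximal* dyadic interval on which the fiberwise average of `G(x,·)`
exceeds `1`. -/
def maxBad (G : ℝ × ℝ → ℝ) (x : ℝ) (k l : ℤ) : Prop :=
  avgGt G x k l ∧ ∀ k' l' : ℤ, dIco k l ⊆ dIco k' l' → dIco k l ≠ dIco k' l' →
    ¬ avgGt G x k' l'

/-- The exceptional set `E = ∪_x ∪_{J ∈ J_x} ({x} × J)`. -/
def Eset (G : ℝ × ℝ → ℝ) : Set (ℝ × ℝ) :=
  {p : ℝ × ℝ | ∃ k l : ℤ, maxBad G p.1 k l ∧ p.2 ∈ dIco k l}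

/-- The "good part" `G̃` of `G`: on each fiber, replace `G(x,·)` on each maximal bad
interval `J ∈ J_x` by its average `(1/|J|)∫_J G(x,v) dv`. -/
def Gtil (G : ℝ × ℝ → ℝ) (p : ℝ × ℝ) : ℝ :=
  if h : ∃ k l : ℤ, maxBad G p.1 k l ∧ p.2 ∈ dIco k l then
    ((2:ℝ)^(h.choose))⁻¹ * ∫ v in dIco h.choose h.choose_spec.choose, G (p.1, v)
  else G p

lemma two_zpow_pos (k : ℤ) : (0:ℝ) < 2^k := zpow_pos (by norm_num) k

lemma mem_dIco {k l : ℤ} {v : ℝ} : v ∈ dIco k l ↔ ⌊v / 2^k⌋ = l := by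
  have hp := two_zpow_pos k
  rw [dIco, Set.mem_Ico, Int.floor_eq_iff, le_div_iff₀ hp, div_lt_iff₀ hp]
  push_cast
  constructor <;> rintro ⟨h1, h2⟩ <;> constructor <;> nlinarith

lemma left_mem_dIco (k l : ℤ) : (2:ℝ)^k * l ∈ dIco k l := by
  have hp := two_zpow_pos k
  refine ⟨le_refl _, ?_⟩
  have : (l:ℝ) < l + 1 := by linarith
  exact mul_lt_mul_of_pos_left this hp

lemma measurableSet_dIco (k l : ℤ) : MeasurableSet (dIco k l) := by
  unfold dIco; exact measurableSet_Ico

lemma volume_dIco (k l : ℤ) : volume (dIco k l) = ENNReal.ofReal ((2:ℝ)^k) := by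
  rw [dIco, Real.volume_Ico]; congr 1; ring

lemma dIco_subset {k l k' l' : ℤ} (hk : k ≤ k') {v : ℝ}
    (h1 : v ∈ dIco k l) (h2 : v ∈ dIco k' l') : dIco k l ⊆ dIco k' l' := by
  have hp := two_zpow_pos k
  set n := (k' - k).toNat with hn
  set M : ℤ := 2^n with hMdef
  have hM : (2:ℝ)^k' = 2^k * (M:ℝ) := by
    have hkn : k' = k + (n:ℤ) := by omega
    rw [hkn, zpow_add₀ (by norm_num : (2:ℝ) ≠ 0), zpow_natCast]
    push_cast [hMdef]
    ring
  obtain ⟨ha1, ha2⟩ := h1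
  obtain ⟨hb1, hb2⟩ := h2
  rw [dIco] at *
  rw [hM] at hb1 hb2
  have e1 : (M * l' : ℤ) ≤ l := by
    have : (2:ℝ)^k * ((M:ℝ) * l') ≤ v := by rw [← mul_assoc]; exact hb1
    have h3 : ((M:ℝ) * l') < (l:ℝ) + 1 := by
      by_contra hcon
      push_neg at hcon
      nlinarith
    have : ((M * l' : ℤ):ℝ) < ((l + 1 : ℤ):ℝ) := by push_cast; linarith
    have := Int.cast_lt.mp this
    omega
  have e2 : l + 1 ≤ M * (l' + 1) := by
    have h3 : (l:ℝ) < (M:ℝ) * ((l':ℝ) + 1) := by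
      by_contra hcon
      push_neg at hcon
      nlinarith
    have : ((l:ℤ):ℝ) < ((M * (l' + 1) : ℤ):ℝ) := by push_cast; linarith
    have := Int.cast_lt.mp this
    omega
  intro w hw
  obtain ⟨hw1, hw2⟩ := hw
  rw [dIco, Set.mem_Ico, hM]
  have c1 : ((M:ℝ) * l') ≤ (l:ℝ) := by
    have : ((M * l' : ℤ):ℝ) ≤ ((l:ℤ):ℝ) := Int.cast_le.mpr e1
    push_cast at this; linarith
  have c2 : ((l:ℝ) + 1) ≤ (M:ℝ) * ((l':ℝ) + 1) := by
    have : ((l + 1 : ℤ):ℝ) ≤ ((M * (l' + 1) : ℤ):ℝ) := Int.cast_le.mpr e2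
    push_cast at this; linarith
  constructor
  · nlinarith
  · nlinarith

lemma dIco_nested {k l k' l' : ℤ} (h : (dIco k l ∩ dIco k' l').Nonempty) :
    dIco k l ⊆ dIco k' l' ∨ dIco k' l' ⊆ dIco k l := by
  obtain ⟨v, hv1, hv2⟩ := h
  rcases le_total k k' with h | h
  · exact Or.inl (dIco_subset h hv1 hv2)
  · exact Or.inr (dIco_subset h hv2 hv1)

lemma dIco_scale_mono {k l k' l' : ℤ} (h : dIco k l ⊆ dIco k' l') : k ≤ k' := by
  have hm := measure_mono (μ := volume) h
  rw [volume_dIco, volume_dIco, ENNReal.ofReal_le_ofReal_iff (two_zpow_pos k').le] at hm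
  exact (zpow_le_zpow_iff_right₀ (by norm_num : (1:ℝ) < 2)).mp hm

lemma dIco_eq_params {k l k' l' : ℤ} (h : dIco k l = dIco k' l') : k = k' ∧ l = l' := by
  have hk : k = k' := le_antisymm (dIco_scale_mono h.subset) (dIco_scale_mono h.symm.subset)
  subst hk
  have h1 : ⌊(2:ℝ)^k * l / 2^k⌋ = l := mem_dIco.mp (left_mem_dIco k l)
  have h2 : ⌊(2:ℝ)^k * l / 2^k⌋ = l' := mem_dIco.mp (h.subset (left_mem_dIco k l))
  exact ⟨rfl, h1.symm.trans h2⟩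

lemma dIco_split (k l : ℤ) : dIco k l = dIco (k-1) (2*l) ∪ dIco (k-1) (2*l+1) := by
  have h2 : (2:ℝ)^k = 2^(k-1) * 2 := by
    rw [← zpow_add_one₀ (by norm_num : (2:ℝ) ≠ 0) (k-1), sub_add_cancel]
  have hp := two_zpow_pos (k-1)
  ext v
  simp only [dIco, Set.mem_Ico, Set.mem_union]
  push_cast
  rw [h2]
  constructor
  · rintro ⟨ha, hb⟩
    rcases lt_or_ge v ((2:ℝ)^(k-1) * (2*(l:ℝ)+1)) with h | h
    · exact Or.inl ⟨by nlinarith, h⟩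
    · exact Or.inr ⟨h, by nlinarith⟩
  · rintro (⟨ha, hb⟩ | ⟨ha, hb⟩) <;> constructor <;> nlinarith

lemma dIco_halves_disjoint (k l : ℤ) :
    Disjoint (dIco (k-1) (2*l)) (dIco (k-1) (2*l+1)) := by
  rw [Set.disjoint_left]
  intro v h1 h2
  have e1 := mem_dIco.mp h1
  have e2 := mem_dIco.mp h2
  omega

/-- **Fiber-wise Calderón–Zygmund vanishing:** for a nonnegative dyadic step function `G` with
`‖G‖_{L¹} = 1`, the bad part `G − G̃` has vanishing fiberwise Haar coefficients off the
exceptional set: `(∫ (G(x,v) − G̃(x,v)) ψ_{J'}(v) dv) ψ_{J'}(y) = 0` for `(x,y) ∉ E`;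
consequently `T_d(F, G − G̃) = 0` off `E` for every `F`. -/
theorem cz_vanishing (G : ℝ × ℝ → ℝ) (hstep : IsDyadicStep G)
    (h0 : ∀ p, 0 ≤ G p) (hL1 : (∫ p : ℝ × ℝ, G p) = 1) :
    (∀ k' l' : ℤ, ∀ p : ℝ × ℝ, p ∉ Eset G →
      (∫ v : ℝ, (G (p.1, v) - Gtil G (p.1, v)) * haarPsi k' l' v) * haarPsi k' l' p.2 = 0) ∧
    (∀ F : ℝ × ℝ → ℝ, ∀ p : ℝ × ℝ, p ∉ Eset G →
      Td F (fun r => G r - Gtil G r) p = 0) := by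
  clear h0 hL1
  obtain ⟨s, c, hG⟩ := hstep
  obtain ⟨M0, hM0⟩ := Finset.exists_le (s.image fun r => -r.2.1)
  set k0 : ℤ := -M0 with hk0def
  have hk0 : ∀ r ∈ s, k0 ≤ r.2.1 := by
    intro r hr
    have := hM0 _ (Finset.mem_image_of_mem _ hr)
    omega
  have hvol_lt : ∀ k l : ℤ, volume (dIco k l) < ⊤ := fun k l => by
    rw [volume_dIco]; exact ENNReal.ofReal_lt_top
  have hconst : ∀ (x : ℝ) (k l : ℤ), k ≤ k0 → ∀ v ∈ dIco k l, ∀ w ∈ dIco k l,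
      G (x, v) = G (x, w) := by
    intro x k l hk v hv w hw
    rw [hG (x, v), hG (x, w)]
    refine Finset.sum_congr rfl fun r hr => ?_
    have hk' : k ≤ r.2.1 := le_trans hk (hk0 r hr)
    by_cases hint : (dIco k l ∩ dIco r.2.1 r.2.2).Nonempty
    · obtain ⟨u, hu1, hu2⟩ := hint
      have hsub := dIco_subset hk' hu1 hu2
      simp [Set.indicator_apply, Set.mem_prod, hsub hv, hsub hw]
    · have hv' : v ∉ dIco r.2.1 r.2.2 := fun h => hint ⟨v, hv, h⟩
      have hw' : w ∉ dIco r.2.1 r.2.2 := fun h => hint ⟨w, hw, h⟩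
      simp [Set.indicator_apply, Set.mem_prod, hv', hw']
  have hgint : ∀ x : ℝ, Integrable (fun v => G (x, v)) volume := by
    intro x
    have hrep : (fun v => G (x, v)) = fun v =>
        ∑ r ∈ s, Set.indicator (dIco r.2.1 r.2.2)
          (fun _ => c r * Set.indicator (dIco r.1.1 r.1.2) (fun _ => (1:ℝ)) x) v := by
      funext v
      rw [hG (x, v)]
      refine Finset.sum_congr rfl fun r hr => ?_
      by_cases hx : x ∈ dIco r.1.1 r.1.2 <;> by_cases hv : v ∈ dIco r.2.1 r.2.2 <;>
        simp [Set.indicator_apply, Set.mem_prod, hx, hv]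
    rw [hrep]
    apply integrable_finset_sum
    intro r _
    rw [integrable_indicator_iff (measurableSet_dIco _ _)]
    exact integrableOn_const (hvol_lt _ _).ne
  have int_const : ∀ (k l : ℤ) (C : ℝ), (∫ _ in dIco k l, C) = 2^k * C := by
    intro k l C
    rw [setIntegral_const, measureReal_def, volume_dIco, ENNReal.toReal_ofReal (two_zpow_pos k).le, smul_eq_mul]
  have badUnique : ∀ (x : ℝ) (k l k' l' : ℤ), maxBad G x k l → maxBad G x k' l' →
      ∀ v : ℝ, v ∈ dIco k l → v ∈ dIco k' l' → k = k' ∧ l = l' := by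
    intro x k l k' l' h h' v hv hv'
    rcases dIco_nested ⟨v, hv, hv'⟩ with hs | hs
    · by_cases he : dIco k l = dIco k' l'
      · exact dIco_eq_params he
      · exact absurd h'.1 (h.2 k' l' hs he)
    · by_cases he : dIco k' l' = dIco k l
      · have := dIco_eq_params he
        exact ⟨this.1.symm, this.2.symm⟩
      · exact absurd h.1 (h'.2 k l hs he)
  have hGtil_bad : ∀ (x v : ℝ) (k l : ℤ), maxBad G x k l → v ∈ dIco k l →
      Gtil G (x, v) = ((2:ℝ)^k)⁻¹ * ∫ u in dIco k l, G (x, u) := by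
    intro x v k l hb hv
    have hex : ∃ k' l' : ℤ, maxBad G (x, v).1 k' l' ∧ (x, v).2 ∈ dIco k' l' := ⟨k, l, hb, hv⟩
    rw [Gtil, dif_pos hex]
    obtain ⟨hb', hv'⟩ := hex.choose_spec.choose_spec
    have haux : ∀ kc lc : ℤ, maxBad G x kc lc → v ∈ dIco kc lc →
        ((2:ℝ)^kc)⁻¹ * (∫ u in dIco kc lc, G (x, u))
          = ((2:ℝ)^k)⁻¹ * ∫ u in dIco k l, G (x, u) := by
      intro kc lc hbc hvc
      obtain ⟨ek, el⟩ := badUnique x kc lc k l hbc hb v hvc hv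
      subst ek; subst el; rfl
    exact haux _ _ hb' hv'
  have hGtil_off : ∀ (x v : ℝ), ¬ (∃ k l : ℤ, maxBad G x k l ∧ v ∈ dIco k l) →
      Gtil G (x, v) = G (x, v) := by
    intro x v h
    rw [Gtil, dif_neg h]
  have hbad_scale : ∀ (x : ℝ) (k l : ℤ), maxBad G x k l → k0 ≤ k := by
    intro x k l hb
    by_contra hlt
    push_neg at hlt
    have hpar : ∃ q : ℤ, l = 2*q ∨ l = 2*q + 1 := by
      obtain ⟨q, hq⟩ | ⟨q, hq⟩ := Int.even_or_odd l
      exacts [⟨q, Or.inl (by omega)⟩, ⟨q, Or.inr (by omega)⟩]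
    obtain ⟨q, hq⟩ := hpar
    have hsub : dIco k l ⊆ dIco (k+1) q := by
      have hsplit := dIco_split (k+1) q
      rw [show k+1-1 = k from by omega] at hsplit
      rw [hsplit]
      rcases hq with rfl | rfl
      exacts [subset_union_left, subset_union_right]
    have hk1 : k + 1 ≤ k0 := by omega
    have hw0mem : (2:ℝ)^(k+1) * q ∈ dIco (k+1) q := left_mem_dIco (k+1) q
    set c0 : ℝ := G (x, (2:ℝ)^(k+1) * q) with hc0
    have hcst : ∀ v ∈ dIco (k+1) q, G (x, v) = c0 :=
      fun v hv => hconst x (k+1) q hk1 v hv _ hw0mem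
    have hintJ : (∫ u in dIco k l, G (x, u)) = 2^k * c0 := by
      rw [setIntegral_congr_fun (measurableSet_dIco k l) (fun v hv => hcst v (hsub hv))]
      exact int_const k l c0
    have hintP : (∫ u in dIco (k+1) q, G (x, u)) = 2^(k+1) * c0 := by
      rw [setIntegral_congr_fun (measurableSet_dIco _ _) (fun v hv => hcst v hv)]
      exact int_const _ _ c0
    have hc1 : 1 < c0 := by
      have h1 : 1 < ((2:ℝ)^k)⁻¹ * ∫ y in dIco k l, G (x, y) := hb.1
      rw [hintJ, inv_mul_cancel_left₀ (two_zpow_pos k).ne'] at h1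
      exact h1
    have hne : dIco k l ≠ dIco (k+1) q := by
      intro he
      have := (dIco_eq_params he).1
      omega
    refine hb.2 (k+1) q hsub hne ?_
    show 1 < ((2:ℝ)^(k+1))⁻¹ * ∫ y in dIco (k+1) q, G (x, y)
    rw [hintP, inv_mul_cancel_left₀ (two_zpow_pos (k+1)).ne']
    exact hc1
  have caseA : ∀ (x : ℝ) (k l : ℤ), maxBad G x k l →
      IntegrableOn (fun v => G (x, v) - Gtil G (x, v)) (dIco k l) volume ∧
      (∫ v in dIco k l, (G (x, v) - Gtil G (x, v))) = 0 := by
    intro x k l hb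
    set A : ℝ := ((2:ℝ)^k)⁻¹ * ∫ u in dIco k l, G (x, u) with hA
    have heq : Set.EqOn (fun v => G (x, v) - A)
        (fun v => G (x, v) - Gtil G (x, v)) (dIco k l) := by
      intro v hv
      simp only
      rw [hGtil_bad x v k l hb hv]
    have hconst_int : IntegrableOn (fun _ : ℝ => A) (dIco k l) volume :=
      integrableOn_const (hvol_lt k l).ne
    have hint1 : IntegrableOn (fun v => G (x, v) - A) (dIco k l) volume :=
      ((hgint x).integrableOn).sub hconst_int
    constructor
    · exact hint1.congr_fun heq (measurableSet_dIco k l)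
    · rw [← setIntegral_congr_fun (measurableSet_dIco k l) heq]
      rw [integral_sub ((hgint x).integrableOn) hconst_int]
      rw [int_const, hA, mul_inv_cancel_left₀ (two_zpow_pos k).ne', sub_self]
  have hnotbad : ∀ (x : ℝ) (k l : ℤ), k ≤ k0 →
      (¬ ∃ k' l', maxBad G x k' l' ∧ dIco k l ⊆ dIco k' l') →
      ∀ v ∈ dIco k l, ¬ ∃ k' l', maxBad G x k' l' ∧ v ∈ dIco k' l' := by
    intro x k l hk hex v hv hcon
    obtain ⟨k', l', hb, hv'⟩ := hcon
    rcases dIco_nested ⟨v, hv, hv'⟩ with hs | hs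
    · exact hex ⟨k', l', hb, hs⟩
    · have h1 : k0 ≤ k' := hbad_scale x k' l' hb
      have h2 : k' ≤ k := dIco_scale_mono hs
      have h3 : k' = k := by omega
      subst h3
      have h4 : l' = l := (mem_dIco.mp hv').symm.trans (mem_dIco.mp hv)
      subst h4
      exact hex ⟨k', l', hb, subset_rfl⟩
  have key : ∀ (x : ℝ) (n : ℕ) (k l : ℤ), k ≤ k0 + n →
      (∀ k' l' : ℤ, maxBad G x k' l' → dIco k l ⊆ dIco k' l' → dIco k l = dIco k' l') →
      IntegrableOn (fun v => G (x, v) - Gtil G (x, v)) (dIco k l) volume ∧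
      (∫ v in dIco k l, (G (x, v) - Gtil G (x, v))) = 0 := by
    intro x n
    induction n with
    | zero =>
      intro k l hk hyp
      by_cases hex : ∃ k' l', maxBad G x k' l' ∧ dIco k l ⊆ dIco k' l'
      · obtain ⟨k', l', hb, hs⟩ := hex
        obtain ⟨ek, el⟩ := dIco_eq_params (hyp k' l' hb hs)
        have hb' : maxBad G x k l := by rw [ek, el]; exact hb
        exact caseA x k l hb'
      · have hk' : k ≤ k0 := by omega
        have hz : ∀ v ∈ dIco k l, G (x, v) - Gtil G (x, v) = 0 := by
          intro v hv
          rw [hGtil_off x v (hnotbad x k l hk' hex v hv), sub_self]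
        constructor
        · exact (integrableOn_zero).congr_fun
            (fun v hv => (hz v hv).symm) (measurableSet_dIco k l)
        · rw [setIntegral_congr_fun (measurableSet_dIco k l)
            (fun v hv => hz v hv : Set.EqOn _ (fun _ => (0:ℝ)) _)]
          simp
    | succ n IH =>
      intro k l hk hyp
      by_cases hkn : k ≤ k0 + n
      · exact IH k l hkn hyp
      · by_cases hex : ∃ k' l', maxBad G x k' l' ∧ dIco k l ⊆ dIco k' l'
        · obtain ⟨k', l', hb, hs⟩ := hex
          obtain ⟨ek, el⟩ := dIco_eq_params (hyp k' l' hb hs)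
          have hb' : maxBad G x k l := by rw [ek, el]; exact hb
          exact caseA x k l hb'
        · have hhalf : ∀ m : ℤ, m = 2*l ∨ m = 2*l+1 →
              ∀ k' l' : ℤ, maxBad G x k' l' → dIco (k-1) m ⊆ dIco k' l' →
                dIco (k-1) m = dIco k' l' := by
            intro m hm k' l' hb hs
            have hmI : dIco (k-1) m ⊆ dIco k l := by
              rw [dIco_split k l]
              rcases hm with rfl | rfl
              exacts [subset_union_left, subset_union_right]
            have hu : (2:ℝ)^(k-1) * m ∈ dIco (k-1) m := left_mem_dIco _ _
            rcases dIco_nested ⟨_, hmI hu, hs hu⟩ with h1 | h1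
            · exact absurd ⟨k', l', hb, h1⟩ hex
            · have ha : k - 1 ≤ k' := dIco_scale_mono hs
              have hbb : k' ≤ k := dIco_scale_mono h1
              by_cases hkk : k' = k
              · subst hkk
                have hl : l' = l :=
                  (mem_dIco.mp (left_mem_dIco k' l')).symm.trans
                    (mem_dIco.mp (h1 (left_mem_dIco k' l')))
                subst hl
                exact absurd ⟨k', l', hb, subset_rfl⟩ hex
              · have hkk' : k' = k - 1 := by omega
                subst hkk'
                have hml : m = l' :=
                  (mem_dIco.mp (left_mem_dIco (k-1) m)).symm.trans
                    (mem_dIco.mp (hs (left_mem_dIco (k-1) m)))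
                rw [hml]
          have hk1 : k - 1 ≤ k0 + n := by omega
          have IH0 := IH (k-1) (2*l) hk1 (hhalf (2*l) (Or.inl rfl))
          have IH1 := IH (k-1) (2*l+1) hk1 (hhalf (2*l+1) (Or.inr rfl))
          constructor
          · rw [dIco_split k l]
            exact IH0.1.union IH1.1
          · rw [dIco_split k l,
              setIntegral_union (dIco_halves_disjoint k l) (measurableSet_dIco _ _)
                IH0.1 IH1.1,
              IH0.2, IH1.2, add_zero]
  constructor
  · intro k' l' p hp
    have hEnot : ¬ ∃ k l : ℤ, maxBad G p.1 k l ∧ p.2 ∈ dIco k l := hp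
    by_cases hpsi : haarPsi k' l' p.2 = 0
    · rw [hpsi, mul_zero]
    · have hy : p.2 ∈ dIco (k'-1) (2*l') ∨ p.2 ∈ dIco (k'-1) (2*l'+1) := by
        by_contra hcon
        rw [not_or] at hcon
        rw [haarPsi, if_neg hcon.1, if_neg hcon.2] at hpsi
        exact hpsi rfl
      have hyJ' : p.2 ∈ dIco k' l' := by
        rw [dIco_split k' l']
        rcases hy with h | h
        exacts [Set.mem_union_left _ h, Set.mem_union_right _ h]
      have hhyp : ∀ m : ℤ, m = 2*l' ∨ m = 2*l'+1 →
          ∀ ka la : ℤ, maxBad G p.1 ka la → dIco (k'-1) m ⊆ dIco ka la →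
            dIco (k'-1) m = dIco ka la := by
        intro m hm ka la hb hs
        have hynot : p.2 ∉ dIco ka la := fun h => hEnot ⟨ka, la, hb, h⟩
        have hmI : dIco (k'-1) m ⊆ dIco k' l' := by
          rw [dIco_split k' l']
          rcases hm with rfl | rfl
          exacts [subset_union_left, subset_union_right]
        have hu : (2:ℝ)^(k'-1) * m ∈ dIco (k'-1) m := left_mem_dIco _ _
        rcases dIco_nested ⟨_, hs hu, hmI hu⟩ with h1 | h1
        · have hbb : ka ≤ k' := dIco_scale_mono h1
          have ha : k' - 1 ≤ ka := dIco_scale_mono hs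
          by_cases hkk : ka = k'
          · subst hkk
            have hl : la = l' :=
              (mem_dIco.mp (left_mem_dIco ka la)).symm.trans
                (mem_dIco.mp (h1 (left_mem_dIco ka la)))
            subst hl
            exact absurd hyJ' hynot
          · have hka : ka = k' - 1 := by omega
            subst hka
            have hml : m = la :=
              (mem_dIco.mp (left_mem_dIco (k'-1) m)).symm.trans
                (mem_dIco.mp (hs (left_mem_dIco (k'-1) m)))
            rw [hml]
        · exact absurd (h1 hyJ') hynot
      have K0 := key p.1 ((k'-1) - k0).toNat (k'-1) (2*l') (by omega)
        (hhyp (2*l') (Or.inl rfl))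
      have K1 := key p.1 ((k'-1) - k0).toNat (k'-1) (2*l'+1) (by omega)
        (hhyp (2*l'+1) (Or.inr rfl))
      have hpsieq : ∀ v : ℝ, (G (p.1, v) - Gtil G (p.1, v)) * haarPsi k' l' v =
          (Real.sqrt ((2:ℝ)^k'))⁻¹ *
            Set.indicator (dIco (k'-1) (2*l')) (fun v => G (p.1, v) - Gtil G (p.1, v)) v
          - (Real.sqrt ((2:ℝ)^k'))⁻¹ *
            Set.indicator (dIco (k'-1) (2*l'+1)) (fun v => G (p.1, v) - Gtil G (p.1, v)) v := by
        intro v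
        rw [haarPsi]
        by_cases h1 : v ∈ dIco (k'-1) (2*l')
        · have h2 : v ∉ dIco (k'-1) (2*l'+1) :=
            fun h => Set.disjoint_left.mp (dIco_halves_disjoint k' l') h1 h
          rw [if_pos h1, Set.indicator_of_mem h1, Set.indicator_of_notMem h2]
          ring
        · by_cases h2 : v ∈ dIco (k'-1) (2*l'+1)
          · rw [if_neg h1, if_pos h2, Set.indicator_of_notMem h1, Set.indicator_of_mem h2]
            ring
          · rw [if_neg h1, if_neg h2, Set.indicator_of_notMem h1, Set.indicator_of_notMem h2]
            ring
      have hint0 : Integrable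
          ((dIco (k'-1) (2*l')).indicator (fun v => G (p.1, v) - Gtil G (p.1, v))) volume :=
        (integrable_indicator_iff (measurableSet_dIco _ _)).mpr K0.1
      have hint1 : Integrable
          ((dIco (k'-1) (2*l'+1)).indicator (fun v => G (p.1, v) - Gtil G (p.1, v))) volume :=
        (integrable_indicator_iff (measurableSet_dIco _ _)).mpr K1.1
      have hI : (∫ v : ℝ, (G (p.1, v) - Gtil G (p.1, v)) * haarPsi k' l' v) = 0 := by
        have hfe : (fun v : ℝ => (G (p.1, v) - Gtil G (p.1, v)) * haarPsi k' l' v)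
            = fun v => (Real.sqrt ((2:ℝ)^k'))⁻¹ *
                Set.indicator (dIco (k'-1) (2*l')) (fun v => G (p.1, v) - Gtil G (p.1, v)) v
              - (Real.sqrt ((2:ℝ)^k'))⁻¹ *
                Set.indicator (dIco (k'-1) (2*l'+1)) (fun v => G (p.1, v) - Gtil G (p.1, v)) v :=
          funext hpsieq
        rw [hfe]
        rw [integral_sub (hint0.const_mul _) (hint1.const_mul _),
          integral_const_mul, integral_const_mul,
          integral_indicator (measurableSet_dIco _ _),
          integral_indicator (measurableSet_dIco _ _),
          K0.2, K1.2]
        ring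
      rw [hI, zero_mul]
  · intro F p hp
    have hEk : ∀ m : ℤ, Ek m (fun v => G (p.1, v) - Gtil G (p.1, v)) p.2 = 0 := by
      intro m
      have hy : p.2 ∈ dIco (-m) ⌊(2:ℝ)^m * p.2⌋ := by
        rw [mem_dIco, zpow_neg, div_eq_mul_inv, inv_inv, mul_comm p.2 ((2:ℝ)^m)]
      have hhyp : ∀ ka la : ℤ, maxBad G p.1 ka la →
          dIco (-m) ⌊(2:ℝ)^m * p.2⌋ ⊆ dIco ka la →
          dIco (-m) ⌊(2:ℝ)^m * p.2⌋ = dIco ka la := by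
        intro ka la hb hs
        exact absurd (⟨ka, la, hb, hs hy⟩ : ∃ k l : ℤ, maxBad G p.1 k l ∧ p.2 ∈ dIco k l) hp
      have K := key p.1 ((-m) - k0).toNat (-m) ⌊(2:ℝ)^m * p.2⌋ (by omega) hhyp
      simp only [Ek]
      rw [K.2, mul_zero]
    have hDk2 : ∀ m : ℤ, Dk2 m (fun r => G r - Gtil G r) p = 0 := by
      intro m
      have e1 : Ek2 (m+1) (fun r => G r - Gtil G r) p = 0 := hEk (m+1)
      have e2 : Ek2 m (fun r => G r - Gtil G r) p = 0 := hEk m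
      rw [Dk2, e1, e2, sub_self]
    rw [Td]
    have hterm : ∀ m : ℤ, Ek1 m F p * Dk2 m (fun r => G r - Gtil G r) p = 0 := by
      intro m
      rw [hDk2 m, mul_zero]
    rw [tsum_congr hterm, tsum_zero]
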